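/- Fix a point p_i and a uniformly random permutation p_1, …, p_n of the remaining points. A split-below event E_{i,j} occurs if there exists a bunch B near p_i in P_j (for fixed constants α, β) such that p_j is the unique farthest point in B from the first-inserted point of B. If the number of bunches near p_i in any prefix is at most d, then Σ_{j=1}^{n} Pr[E_{i,j}] ≤ 2d·H_n = O(d·log n). -/

import Mathlib

/-- `B ⊆ Pj` is a bunch near `pi` with center `x ∈ B` (parameters `α`, `β`, `τ`). -/
def IsBunch {M : Type*} [MetricSpace M] (Pj : Set M) (pi : M) (α β τ : ℝ)
    (B : Set M) (x : M) : Prop :=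
  x ∈ B ∧
  B = Metric.closedBall x (α * dist pi x) ∩ Pj ∧
  (∀ y ∈ Pj, dist x y ≤ β * dist pi x → dist x y ≤ α * dist pi x) ∧
  dist pi x ≤ (2 * τ * (τ - 1) / (τ + 2)) * Metric.infDist pi Pj

/-- The prefix `P_j` of the permutation `σ`: points at positions `≤ j`. -/
def prefixSet {n : ℕ} {M : Type*} (pts : Fin n → M) (σ : Equiv.Perm (Fin n))
    (j : Fin n) : Set M :=
  {y | ∃ t : Fin n, t ≤ j ∧ y = pts (σ t)}

/-- Split-below event `E_{i,j}`: there is a bunch `B` near the fixed point `q` in the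
prefix `P_j` such that the point inserted at time `j` lies in `B` and is the unique
farthest point of `B` from the first-inserted point of `B`. -/
def SplitBelowEvent {n : ℕ} {M : Type*} [MetricSpace M] (pts : Fin n → M) (q : M)
    (α β τ : ℝ) (σ : Equiv.Perm (Fin n)) (j : Fin n) : Prop :=
  ∃ (B : Set M) (x : M), IsBunch (prefixSet pts σ j) q α β τ B x ∧
    pts (σ j) ∈ B ∧
    ∃ t0 : Fin n, t0 ≤ j ∧ pts (σ t0) ∈ B ∧
      (∀ t : Fin n, t ≤ j → pts (σ t) ∈ B → t0 ≤ t) ∧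
      ∀ y ∈ B, y ≠ pts (σ j) → dist (pts (σ t0)) y < dist (pts (σ t0)) (pts (σ j))

-- ### Auxiliary development ###

open Finset Equiv

variable {n : ℕ}

/-- permutations of positions that fix everything after `j` -/
def Gset (n : ℕ) (j : Fin n) : Finset (Equiv.Perm (Fin n)) :=
  Finset.univ.filter (fun π => ∀ t, j < t → π t = t)

lemma mem_Gset {j : Fin n} {π : Equiv.Perm (Fin n)} :
    π ∈ Gset n j ↔ ∀ t, j < t → π t = t := by simp [Gset]

lemma one_mem_Gset (j : Fin n) : 1 ∈ Gset n j := by simp [mem_Gset]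

lemma Gset_apply_le {j : Fin n} {π : Equiv.Perm (Fin n)} (hπ : π ∈ Gset n j)
    {t : Fin n} (ht : t ≤ j) : π t ≤ j := by
  rw [mem_Gset] at hπ
  by_contra h
  push_neg at h
  have := hπ _ h
  have : π (π t) = π t := this
  have := π.injective this
  exact absurd (this ▸ h) (not_lt.mpr ht)

lemma mul_mem_Gset {j : Fin n} {π ρ : Equiv.Perm (Fin n)} (hπ : π ∈ Gset n j)
    (hρ : ρ ∈ Gset n j) : π * ρ ∈ Gset n j := by
  rw [mem_Gset] at *
  intro t ht
  simp [Equiv.Perm.mul_apply, hρ t ht, hπ t ht]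

lemma inv_mem_Gset {j : Fin n} {π : Equiv.Perm (Fin n)} (hπ : π ∈ Gset n j) :
    π⁻¹ ∈ Gset n j := by
  rw [mem_Gset] at *
  intro t ht
  have := hπ t ht
  exact π.injective (by simp [this])

lemma swap_mem_Gset {j : Fin n} {a b : Fin n} (ha : a ≤ j) (hb : b ≤ j) :
    Equiv.swap a b ∈ Gset n j := by
  rw [mem_Gset]
  intro t ht
  apply Equiv.swap_apply_of_ne_of_ne
  · exact fun h => absurd (h ▸ ht) (not_lt.mpr ha)
  · exact fun h => absurd (h ▸ ht) (not_lt.mpr hb)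

/-- generic swap-bijection card equality on Gset -/
lemma Gset_card_swap {j : Fin n} {a b : Fin n} (ha : a ≤ j) (hb : b ≤ j)
    (p q : Equiv.Perm (Fin n) → Prop) [DecidablePred p] [DecidablePred q]
    (hpq : ∀ π, p π → q (Equiv.swap a b * π))
    (hqp : ∀ π, q π → p (Equiv.swap a b * π)) :
    ((Gset n j).filter p).card = ((Gset n j).filter q).card := by
  apply Finset.card_bij' (fun π _ => Equiv.swap a b * π) (fun π _ => Equiv.swap a b * π)
  · intro π hπ
    simp only [Finset.mem_filter] at hπ ⊢
    exact ⟨mul_mem_Gset (swap_mem_Gset ha hb) hπ.1, hpq π hπ.2⟩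
  · intro π hπ
    simp only [Finset.mem_filter] at hπ ⊢
    exact ⟨mul_mem_Gset (swap_mem_Gset ha hb) hπ.1, hqp π hπ.2⟩
  · intro π _
    simp [← mul_assoc, Equiv.swap_mul_self]
  · intro π _
    simp [← mul_assoc, Equiv.swap_mul_self]

/-- fibers of π ↦ π j are equi-sized, hence each fiber times (j+1) is at most |G| -/
lemma fiber_card_le {j : Fin n} {u : Fin n} (hu : u ≤ j) :
    ((Gset n j).filter (fun π => π j = u)).card * ((j : ℕ) + 1) ≤ (Gset n j).card := by
  have hpart : (Gset n j).card
      = ∑ v ∈ Finset.Iic j, ((Gset n j).filter (fun π => π j = v)).card := by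
    apply Finset.card_eq_sum_card_fiberwise
    intro π hπ
    simpa using Gset_apply_le hπ (le_refl j)
  have heq : ∀ v ∈ Finset.Iic j,
      ((Gset n j).filter (fun π => π j = v)).card
        = ((Gset n j).filter (fun π => π j = u)).card := by
    intro v hv
    rw [Finset.mem_Iic] at hv
    rcases eq_or_ne v u with rfl | hne
    · rfl
    apply Gset_card_swap hv hu
    · intro π hπ
      simp [Equiv.Perm.mul_apply, hπ, Equiv.swap_apply_left]
    · intro π hπ
      simp [Equiv.Perm.mul_apply, hπ, Equiv.swap_apply_right]
  rw [hpart, Finset.sum_congr rfl heq, Finset.sum_const, Fin.card_Iic, smul_eq_mul]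
  rw [mul_comm]

lemma swap_first {S : Finset (Fin n)} {a b : Fin n} (haS : a ∈ S) (hbS : b ∈ S)
    (π : Equiv.Perm (Fin n)) {w : Fin n} (hw : ∀ s ∈ S, π⁻¹ w ≤ π⁻¹ s) :
    ∀ s ∈ S, (Equiv.swap a b * π)⁻¹ (Equiv.swap a b w) ≤ (Equiv.swap a b * π)⁻¹ s := by
  intro s hs
  have key : ((Equiv.swap a b * π)⁻¹ : Equiv.Perm (Fin n)) = π⁻¹ * Equiv.swap a b := by
    rw [mul_inv_rev, Equiv.swap_inv]
  rw [key]
  simp only [Equiv.Perm.mul_apply, Equiv.swap_apply_self]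
  apply hw
  rcases eq_or_ne s a with rfl | hsa
  · simpa [Equiv.swap_apply_left] using hbS
  rcases eq_or_ne s b with rfl | hsb
  · simpa [Equiv.swap_apply_right] using haS
  · rwa [Equiv.swap_apply_of_ne_of_ne hsa hsb]

open scoped Classical in
/-- core: one bunch contributes at most `2|G|/(j+1)` permutations -/
lemma bunch_count {j : Fin n} (S : Finset (Fin n)) (hS : ∀ s ∈ S, s ≤ j)
    (C : Fin n → Fin n → Prop)
    (hC : ∀ v u₁ u₂, u₁ ∈ S → u₂ ∈ S → C v u₁ → C v u₂ → u₁ = u₂) :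
    ((Gset n j).filter (fun π => π j ∈ S ∧
        ∃ v ∈ S, (∀ s ∈ S, π⁻¹ v ≤ π⁻¹ s) ∧ C v (π j))).card * ((j : ℕ) + 1)
      ≤ 2 * (Gset n j).card := by
  set A := (Gset n j).filter (fun π => π j ∈ S ∧
      ∃ v ∈ S, (∀ s ∈ S, π⁻¹ v ≤ π⁻¹ s) ∧ C v (π j)) with hA
  have hfirst_ne : ∀ (π : Equiv.Perm (Fin n)), π ∈ Gset n j → 2 ≤ S.card →
      ∀ v ∈ S, (∀ s ∈ S, π⁻¹ v ≤ π⁻¹ s) → π j ≠ v := by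
    intro π hπ h2 v hv hfirst hj
    obtain ⟨s, hs, hsv⟩ : ∃ s ∈ S, s ≠ v := by
      by_contra h
      push_neg at h
      have hsub : S ⊆ {v} := fun x hx => Finset.mem_singleton.mpr (h x hx)
      have := Finset.card_le_card hsub
      simp at this; omega
    have h1 : π⁻¹ v = j := by rw [← hj]; simp
    have h2' : π⁻¹ s ≤ j := Gset_apply_le (inv_mem_Gset hπ) (hS s hs)
    have h3 : π⁻¹ v ≤ π⁻¹ s := hfirst s hs
    have h4 : π⁻¹ s = π⁻¹ v := le_antisymm (h1 ▸ h2') h3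
    exact hsv (π⁻¹.injective h4)
  rcases Nat.lt_or_ge S.card 2 with hlt | h2
  · -- |S| ≤ 1
    rcases Finset.eq_empty_or_nonempty S with rfl | ⟨s, hs⟩
    · have : A = ∅ := by
        apply Finset.filter_false_of_mem
        intro π _ h
        simp at h
      simp [this]
    · have hone : ∀ a ∈ S, ∀ b ∈ S, a = b := Finset.card_le_one.mp (by omega)
      have hsub : A ⊆ (Gset n j).filter (fun π => π j = s) := by
        intro π hπ
        simp only [hA, Finset.mem_filter] at hπ ⊢
        exact ⟨hπ.1, hone _ hπ.2.1 s hs⟩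
      calc A.card * ((j:ℕ)+1)
          ≤ ((Gset n j).filter (fun π => π j = s)).card * ((j:ℕ)+1) :=
            Nat.mul_le_mul_right _ (Finset.card_le_card hsub)
        _ ≤ (Gset n j).card := fiber_card_le (hS s hs)
        _ ≤ 2 * (Gset n j).card := by omega
  · -- |S| ≥ 2 : cover by the choice of the first element v
    have hcover : A ⊆ S.biUnion (fun v => (Gset n j).filter
        (fun π => π j ∈ S ∧ C v (π j) ∧ (∀ s ∈ S, π⁻¹ v ≤ π⁻¹ s))) := by
      intro π hπ
      simp only [hA, Finset.mem_filter, Finset.mem_biUnion] at hπ ⊢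
      obtain ⟨hG, hjS, v, hvS, hfirst, hCv⟩ := hπ
      exact ⟨v, hvS, hG, hjS, hCv, hfirst⟩
    have hper : ∀ v ∈ S, ((Gset n j).filter
        (fun π => π j ∈ S ∧ C v (π j) ∧ (∀ s ∈ S, π⁻¹ v ≤ π⁻¹ s))).card
          * (((j:ℕ)+1) * (S.card - 1)) ≤ (Gset n j).card := by
      intro v hv
      by_cases hex : ∃ u ∈ S, C v u
      · obtain ⟨u, huS, hCu⟩ := hex
        have hsub : (Gset n j).filter
            (fun π => π j ∈ S ∧ C v (π j) ∧ (∀ s ∈ S, π⁻¹ v ≤ π⁻¹ s))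
            ⊆ (Gset n j).filter (fun π => π j = u ∧ (∀ s ∈ S, π⁻¹ v ≤ π⁻¹ s)) := by
          intro π hπ
          simp only [Finset.mem_filter] at hπ ⊢
          exact ⟨hπ.1, hC v _ u hπ.2.1 huS hπ.2.2.1 hCu, hπ.2.2.2⟩
        rcases eq_or_ne u v with rfl | huv
        · have hempty : (Gset n j).filter
              (fun π => π j = u ∧ (∀ s ∈ S, π⁻¹ u ≤ π⁻¹ s)) = ∅ := by
            apply Finset.filter_false_of_mem
            rintro π hπ ⟨hju, hf⟩
            exact hfirst_ne π hπ h2 u huS hf hju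
          have : (Gset n j).filter
              (fun π => π j ∈ S ∧ C u (π j) ∧ (∀ s ∈ S, π⁻¹ u ≤ π⁻¹ s)) = ∅ :=
            Finset.subset_empty.mp (hempty ▸ hsub)
          rw [this]; simp
        · -- u ≠ v : equi-distribution of the first element among S.erase u
          have heq : ∀ v' ∈ S.erase u,
              ((Gset n j).filter (fun π => π j = u ∧ (∀ s ∈ S, π⁻¹ v' ≤ π⁻¹ s))).card
              = ((Gset n j).filter (fun π => π j = u ∧ (∀ s ∈ S, π⁻¹ v ≤ π⁻¹ s))).card := by
            intro v' hv'
            obtain ⟨hv'u, hv'S⟩ := Finset.mem_erase.mp hv'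
            rcases eq_or_ne v' v with rfl | hvv'
            · rfl
            apply Gset_card_swap (hS v' hv'S) (hS v hv)
            · rintro π ⟨hju, hf⟩
              refine ⟨?_, ?_⟩
              · simp only [Equiv.Perm.mul_apply, hju]
                exact Equiv.swap_apply_of_ne_of_ne (Ne.symm hv'u) huv
              · have := swap_first hv'S hv (π := π) hf
                rwa [Equiv.swap_apply_left] at this
            · rintro π ⟨hju, hf⟩
              refine ⟨?_, ?_⟩
              · simp only [Equiv.Perm.mul_apply, hju]
                exact Equiv.swap_apply_of_ne_of_ne (Ne.symm hv'u) huv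
              · have := swap_first hv'S hv (π := π) hf
                rwa [Equiv.swap_apply_right] at this
          have hdisj : ((S.erase u : Finset (Fin n)) : Set (Fin n)).PairwiseDisjoint
              (fun v' => (Gset n j).filter
                (fun π => π j = u ∧ (∀ s ∈ S, π⁻¹ v' ≤ π⁻¹ s))) := by
            intro a ha b hb hab
            simp only [Finset.disjoint_left, Finset.mem_filter]
            rintro π ⟨hπG, hju, hfa⟩ ⟨_, _, hfb⟩
            have haS := (Finset.mem_erase.mp ha).2
            have hbS := (Finset.mem_erase.mp hb).2
            have : π⁻¹ a = π⁻¹ b := le_antisymm (hfa b hbS) (hfb a haS)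
            exact hab (π⁻¹.injective this)
          have hsum : ∑ v' ∈ S.erase u,
              ((Gset n j).filter (fun π => π j = u ∧ (∀ s ∈ S, π⁻¹ v' ≤ π⁻¹ s))).card
              ≤ ((Gset n j).filter (fun π => π j = u)).card := by
            rw [← Finset.card_biUnion (fun a ha b hb hab => hdisj ha hb hab)]
            apply Finset.card_le_card
            intro π hπ
            simp only [Finset.mem_biUnion, Finset.mem_filter] at hπ ⊢
            obtain ⟨v', _, hG, hju, _⟩ := hπ
            exact ⟨hG, hju⟩
          have hconst : ∑ v' ∈ S.erase u,
              ((Gset n j).filter (fun π => π j = u ∧ (∀ s ∈ S, π⁻¹ v' ≤ π⁻¹ s))).card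
              = (S.card - 1) *
                ((Gset n j).filter (fun π => π j = u ∧ (∀ s ∈ S, π⁻¹ v ≤ π⁻¹ s))).card := by
            rw [Finset.sum_congr rfl heq, Finset.sum_const, Finset.card_erase_of_mem huS,
              smul_eq_mul]
          have hkey : ((Gset n j).filter
              (fun π => π j = u ∧ (∀ s ∈ S, π⁻¹ v ≤ π⁻¹ s))).card * (S.card - 1)
              ≤ ((Gset n j).filter (fun π => π j = u)).card := by
            rw [mul_comm, ← hconst]; exact hsum
          calc ((Gset n j).filter
              (fun π => π j ∈ S ∧ C v (π j) ∧ (∀ s ∈ S, π⁻¹ v ≤ π⁻¹ s))).card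
                * (((j:ℕ)+1) * (S.card - 1))
              ≤ ((Gset n j).filter
                (fun π => π j = u ∧ (∀ s ∈ S, π⁻¹ v ≤ π⁻¹ s))).card
                * (((j:ℕ)+1) * (S.card - 1)) :=
                Nat.mul_le_mul_right _ (Finset.card_le_card hsub)
            _ = (((Gset n j).filter
                (fun π => π j = u ∧ (∀ s ∈ S, π⁻¹ v ≤ π⁻¹ s))).card * (S.card - 1))
                * ((j:ℕ)+1) := by ring
            _ ≤ ((Gset n j).filter (fun π => π j = u)).card * ((j:ℕ)+1) :=
                Nat.mul_le_mul_right _ hkey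
            _ ≤ (Gset n j).card := fiber_card_le (hS u huS)
      · have : (Gset n j).filter
            (fun π => π j ∈ S ∧ C v (π j) ∧ (∀ s ∈ S, π⁻¹ v ≤ π⁻¹ s)) = ∅ := by
          apply Finset.filter_false_of_mem
          rintro π hπ ⟨h1', h2', h3'⟩
          exact hex ⟨π j, h1', h2'⟩
        rw [this]; simp
    -- assemble
    have hcardA : A.card ≤ ∑ v ∈ S, ((Gset n j).filter
        (fun π => π j ∈ S ∧ C v (π j) ∧ (∀ s ∈ S, π⁻¹ v ≤ π⁻¹ s))).card :=
      le_trans (Finset.card_le_card hcover) (Finset.card_biUnion_le)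
    have hmain : A.card * (((j:ℕ)+1) * (S.card - 1)) ≤ S.card * (Gset n j).card := by
      calc A.card * (((j:ℕ)+1) * (S.card - 1))
          ≤ (∑ v ∈ S, ((Gset n j).filter
            (fun π => π j ∈ S ∧ C v (π j) ∧ (∀ s ∈ S, π⁻¹ v ≤ π⁻¹ s))).card)
            * (((j:ℕ)+1) * (S.card - 1)) := Nat.mul_le_mul_right _ hcardA
        _ = ∑ v ∈ S, ((Gset n j).filter
            (fun π => π j ∈ S ∧ C v (π j) ∧ (∀ s ∈ S, π⁻¹ v ≤ π⁻¹ s))).card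
            * (((j:ℕ)+1) * (S.card - 1)) := Finset.sum_mul ..
        _ ≤ ∑ v ∈ S, (Gset n j).card := Finset.sum_le_sum hper
        _ = S.card * (Gset n j).card := by rw [Finset.sum_const, smul_eq_mul]
    have hfin : A.card * ((j:ℕ)+1) * (S.card - 1) ≤ (2 * (Gset n j).card) * (S.card - 1) := by
      calc A.card * ((j:ℕ)+1) * (S.card - 1) = A.card * (((j:ℕ)+1) * (S.card - 1)) := by ring
        _ ≤ S.card * (Gset n j).card := hmain
        _ ≤ (2 * (S.card - 1)) * (Gset n j).card := by
            apply Nat.mul_le_mul_right; omega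
        _ = (2 * (Gset n j).card) * (S.card - 1) := by ring
    exact Nat.le_of_mul_le_mul_right hfin (by omega)

lemma prefixSet_mul {M : Type*} (pts : Fin n → M) (σ : Equiv.Perm (Fin n))
    {j : Fin n} {π : Equiv.Perm (Fin n)} (hπ : π ∈ Gset n j) :
    prefixSet pts (σ * π) j = prefixSet pts σ j := by
  ext y
  constructor
  · rintro ⟨t, ht, rfl⟩
    exact ⟨π t, Gset_apply_le hπ ht, rfl⟩
  · rintro ⟨t, ht, rfl⟩
    refine ⟨π⁻¹ t, Gset_apply_le (inv_mem_Gset hπ) ht, ?_⟩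
    simp

lemma prefixSet_finite {M : Type*} (pts : Fin n → M) (σ : Equiv.Perm (Fin n))
    (j : Fin n) : (prefixSet pts σ j).Finite := by
  apply Set.Finite.subset (Set.finite_range pts)
  rintro y ⟨t, _, rfl⟩
  exact ⟨σ t, rfl⟩

lemma bunch_family_finite {M : Type*} [MetricSpace M] (pts : Fin n → M)
    (q : M) (α β τ : ℝ) (σ : Equiv.Perm (Fin n)) (j : Fin n) :
    {B : Set M | ∃ x, IsBunch (prefixSet pts σ j) q α β τ B x}.Finite := by
  apply Set.Finite.subset (prefixSet_finite pts σ j).finite_subsets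
  rintro B ⟨x, hb⟩
  rw [hb.2.1]
  exact Set.inter_subset_right

open scoped Classical in
lemma per_perm {M : Type*} [MetricSpace M] (pts : Fin n → M)
    (hinj : Function.Injective pts) (q : M) (α β τ : ℝ) (d : ℕ)
    (σ : Equiv.Perm (Fin n)) (j : Fin n)
    (hd : ({B : Set M | ∃ x, IsBunch (prefixSet pts σ j) q α β τ B x}).ncard ≤ d) :
    ((Gset n j).filter (fun π => SplitBelowEvent pts q α β τ (σ * π) j)).card
      * ((j : ℕ) + 1) ≤ 2 * d * (Gset n j).card := by
  have hfin := bunch_family_finite pts q α β τ σ j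
  set 𝓑 := hfin.toFinset with h𝓑
  -- per-bunch data
  set S : Set M → Finset (Fin n) :=
    fun B => Finset.univ.filter (fun t => t ≤ j ∧ pts (σ t) ∈ B) with hSdef
  set C : Set M → Fin n → Fin n → Prop :=
    fun B v u => ∀ y ∈ B, y ≠ pts (σ u) →
      dist (pts (σ v)) y < dist (pts (σ v)) (pts (σ u)) with hCdef
  have hcover : (Gset n j).filter (fun π => SplitBelowEvent pts q α β τ (σ * π) j)
      ⊆ 𝓑.biUnion (fun B => (Gset n j).filter (fun π => π j ∈ S B ∧
          ∃ v ∈ S B, (∀ s ∈ S B, π⁻¹ v ≤ π⁻¹ s) ∧ C B v (π j))) := by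
    intro π hπ
    simp only [Finset.mem_filter, Finset.mem_biUnion] at hπ ⊢
    obtain ⟨hG, B, x, hbunch, hmem, t0, ht0j, ht0B, hmin, hfar⟩ := hπ
    rw [prefixSet_mul pts σ hG] at hbunch
    refine ⟨B, by simp [h𝓑, Set.Finite.mem_toFinset]; exact ⟨x, hbunch⟩, hG, ?_, ?_⟩
    · simp only [hSdef, Finset.mem_filter, Finset.mem_univ, true_and]
      exact ⟨Gset_apply_le hG le_rfl, hmem⟩
    · refine ⟨π t0, ?_, ?_, ?_⟩
      · simp only [hSdef, Finset.mem_filter, Finset.mem_univ, true_and]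
        exact ⟨Gset_apply_le hG ht0j, ht0B⟩
      · intro s hs
        simp only [hSdef, Finset.mem_filter, Finset.mem_univ, true_and] at hs
        have h1 : π⁻¹ s ≤ j := Gset_apply_le (inv_mem_Gset hG) hs.1
        have h2 : pts ((σ * π) (π⁻¹ s)) ∈ B := by
          simp only [Equiv.Perm.mul_apply, Equiv.Perm.inv_def, Equiv.apply_symm_apply]
          exact hs.2
        have := hmin (π⁻¹ s) h1 h2
        simpa using this
      · intro y hy hne
        exact hfar y hy hne
  have hperB : ∀ B ∈ 𝓑, ((Gset n j).filter (fun π => π j ∈ S B ∧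
      ∃ v ∈ S B, (∀ s ∈ S B, π⁻¹ v ≤ π⁻¹ s) ∧ C B v (π j))).card * ((j : ℕ) + 1)
      ≤ 2 * (Gset n j).card := by
    intro B _
    apply bunch_count
    · intro s hs
      simp only [hSdef, Finset.mem_filter] at hs
      exact hs.2.1
    · intro v u₁ u₂ hu₁ hu₂ hC₁ hC₂
      by_contra hne
      simp only [hSdef, Finset.mem_filter, Finset.mem_univ, true_and] at hu₁ hu₂
      have hptne : pts (σ u₁) ≠ pts (σ u₂) :=
        fun h => hne (σ.injective (hinj h))
      have l1 := hC₂ (pts (σ u₁)) hu₁.2 hptne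
      have l2 := hC₁ (pts (σ u₂)) hu₂.2 hptne.symm
      exact absurd l1 (not_lt.mpr (le_of_lt l2))
  calc ((Gset n j).filter (fun π => SplitBelowEvent pts q α β τ (σ * π) j)).card
      * ((j : ℕ) + 1)
      ≤ (𝓑.biUnion (fun B => (Gset n j).filter (fun π => π j ∈ S B ∧
          ∃ v ∈ S B, (∀ s ∈ S B, π⁻¹ v ≤ π⁻¹ s) ∧ C B v (π j)))).card * ((j : ℕ) + 1) :=
        Nat.mul_le_mul_right _ (Finset.card_le_card hcover)
    _ ≤ (∑ B ∈ 𝓑, ((Gset n j).filter (fun π => π j ∈ S B ∧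
          ∃ v ∈ S B, (∀ s ∈ S B, π⁻¹ v ≤ π⁻¹ s) ∧ C B v (π j))).card) * ((j : ℕ) + 1) :=
        Nat.mul_le_mul_right _ Finset.card_biUnion_le
    _ = ∑ B ∈ 𝓑, ((Gset n j).filter (fun π => π j ∈ S B ∧
          ∃ v ∈ S B, (∀ s ∈ S B, π⁻¹ v ≤ π⁻¹ s) ∧ C B v (π j))).card * ((j : ℕ) + 1) :=
        Finset.sum_mul ..
    _ ≤ ∑ _B ∈ 𝓑, 2 * (Gset n j).card := Finset.sum_le_sum hperB
    _ = 𝓑.card * (2 * (Gset n j).card) := by rw [Finset.sum_const, smul_eq_mul]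
    _ ≤ d * (2 * (Gset n j).card) := by
        apply Nat.mul_le_mul_right
        rwa [h𝓑, ← Set.ncard_eq_toFinset_card _ hfin]
    _ = 2 * d * (Gset n j).card := by ring

open scoped Classical in
theorem expected_split_below_events {n : ℕ} {M : Type*} [MetricSpace M]
    (pts : Fin n → M) (hinj : Function.Injective pts)
    (q : M) (hq : q ∉ Set.range pts)
    (α β τ : ℝ) (hα : 0 < α) (hα2 : α ≤ 1 / 2) (hβ : 2 * α ≤ β)
    (d : ℕ)
    (hd : ∀ (σ : Equiv.Perm (Fin n)) (j : Fin n),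
      ({B : Set M | ∃ x, IsBunch (prefixSet pts σ j) q α β τ B x}).ncard ≤ d) :
    ∑ σ : Equiv.Perm (Fin n),
      (({j : Fin n | SplitBelowEvent pts q α β τ σ j}).ncard : ℝ)
      ≤ (n.factorial : ℝ) * (2 * d * ∑ m ∈ Finset.range n, (1 : ℝ) / (m + 1)) := by
  -- per-j counting bound, in ℕ
  have keyj : ∀ j : Fin n,
      (Finset.univ.filter (fun σ : Equiv.Perm (Fin n) =>
        SplitBelowEvent pts q α β τ σ j)).card * ((j : ℕ) + 1)
      ≤ 2 * d * n.factorial := by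
    intro j
    set N := (Finset.univ.filter (fun σ : Equiv.Perm (Fin n) =>
        SplitBelowEvent pts q α β τ σ j)).card with hN
    have hshift : ∀ π ∈ Gset n j,
        N = (Finset.univ.filter (fun σ : Equiv.Perm (Fin n) =>
          SplitBelowEvent pts q α β τ (σ * π) j)).card := by
      intro π _
      rw [hN]
      apply Finset.card_bij' (fun σ _ => σ * π⁻¹) (fun σ _ => σ * π)
      · intro σ hσ
        simp only [Finset.mem_filter, Finset.mem_univ, true_and] at hσ ⊢
        simpa [mul_assoc]
      · intro σ hσ
        simp only [Finset.mem_filter, Finset.mem_univ, true_and] at hσ ⊢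
        exact hσ
      · intro σ _; simp [mul_assoc]
      · intro σ _; simp [mul_assoc]
    have hdouble : (Gset n j).card * N
        = ∑ σ : Equiv.Perm (Fin n),
            ((Gset n j).filter (fun π => SplitBelowEvent pts q α β τ (σ * π) j)).card := by
      calc (Gset n j).card * N = ∑ π ∈ Gset n j, N := by rw [Finset.sum_const, smul_eq_mul]
        _ = ∑ π ∈ Gset n j, ∑ σ : Equiv.Perm (Fin n),
            (if SplitBelowEvent pts q α β τ (σ * π) j then 1 else 0) := by
            apply Finset.sum_congr rfl
            intro π hπ
            rw [hshift π hπ, Finset.card_filter]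
        _ = ∑ σ : Equiv.Perm (Fin n), ∑ π ∈ Gset n j,
            (if SplitBelowEvent pts q α β τ (σ * π) j then 1 else 0) := Finset.sum_comm
        _ = _ := by
            apply Finset.sum_congr rfl
            intro σ _
            rw [Finset.card_filter]
    have hbound : (Gset n j).card * N * ((j : ℕ) + 1)
        ≤ n.factorial * (2 * d * (Gset n j).card) := by
      calc (Gset n j).card * N * ((j : ℕ) + 1)
          = ∑ σ : Equiv.Perm (Fin n),
            ((Gset n j).filter (fun π => SplitBelowEvent pts q α β τ (σ * π) j)).card
              * ((j : ℕ) + 1) := by rw [hdouble, Finset.sum_mul]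
        _ ≤ ∑ _σ : Equiv.Perm (Fin n), 2 * d * (Gset n j).card := by
            apply Finset.sum_le_sum
            intro σ _
            exact per_perm pts hinj q α β τ d σ j (hd σ j)
        _ = Fintype.card (Equiv.Perm (Fin n)) * (2 * d * (Gset n j).card) := by
            rw [Finset.sum_const, smul_eq_mul]; rfl
        _ = n.factorial * (2 * d * (Gset n j).card) := by
            rw [Fintype.card_perm, Fintype.card_fin]
    have hGpos : 0 < (Gset n j).card := Finset.card_pos.mpr ⟨1, one_mem_Gset j⟩
    have : N * ((j : ℕ) + 1) * (Gset n j).card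
        ≤ (2 * d * n.factorial) * (Gset n j).card := by
      calc N * ((j : ℕ) + 1) * (Gset n j).card
          = (Gset n j).card * N * ((j : ℕ) + 1) := by ring
        _ ≤ n.factorial * (2 * d * (Gset n j).card) := hbound
        _ = (2 * d * n.factorial) * (Gset n j).card := by ring
    exact Nat.le_of_mul_le_mul_right this hGpos
  -- pass to ℝ and sum over j
  have hstep1 : ∑ σ : Equiv.Perm (Fin n),
      (({j : Fin n | SplitBelowEvent pts q α β τ σ j}).ncard : ℝ)
      = ∑ j : Fin n, ((Finset.univ.filter (fun σ : Equiv.Perm (Fin n) =>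
          SplitBelowEvent pts q α β τ σ j)).card : ℝ) := by
    have : ∀ σ : Equiv.Perm (Fin n),
        ({j : Fin n | SplitBelowEvent pts q α β τ σ j}).ncard
        = (Finset.univ.filter (fun j => SplitBelowEvent pts q α β τ σ j)).card := by
      intro σ
      rw [Set.ncard_eq_toFinset_card']
      congr 1
      ext j
      simp [Set.mem_toFinset]
    rw [Finset.sum_congr rfl (fun σ _ => by rw [this σ])]
    push_cast
    rw [← Nat.cast_sum, ← Nat.cast_sum]
    congr 1
    calc ∑ σ : Equiv.Perm (Fin n),
        (Finset.univ.filter (fun j => SplitBelowEvent pts q α β τ σ j)).card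
        = ∑ σ : Equiv.Perm (Fin n), ∑ j : Fin n,
            (if SplitBelowEvent pts q α β τ σ j then 1 else 0) := by
          apply Finset.sum_congr rfl; intro σ _; rw [Finset.card_filter]
      _ = ∑ j : Fin n, ∑ σ : Equiv.Perm (Fin n),
            (if SplitBelowEvent pts q α β τ σ j then 1 else 0) := Finset.sum_comm
      _ = _ := by
          apply Finset.sum_congr rfl; intro j _; rw [Finset.card_filter]
  rw [hstep1]
  have hperj : ∀ j : Fin n,
      ((Finset.univ.filter (fun σ : Equiv.Perm (Fin n) =>
        SplitBelowEvent pts q α β τ σ j)).card : ℝ)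
      ≤ (n.factorial : ℝ) * (2 * d) * (1 / ((j : ℕ) + 1)) := by
    intro j
    have h := keyj j
    have hcast : ((Finset.univ.filter (fun σ : Equiv.Perm (Fin n) =>
        SplitBelowEvent pts q α β τ σ j)).card : ℝ) * (((j : ℕ) : ℝ) + 1)
        ≤ 2 * d * (n.factorial : ℝ) := by exact_mod_cast h
    have hpos : (0 : ℝ) < ((j : ℕ) : ℝ) + 1 := by positivity
    calc ((Finset.univ.filter (fun σ : Equiv.Perm (Fin n) =>
        SplitBelowEvent pts q α β τ σ j)).card : ℝ)
        = (((Finset.univ.filter (fun σ : Equiv.Perm (Fin n) =>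
          SplitBelowEvent pts q α β τ σ j)).card : ℝ) * (((j : ℕ) : ℝ) + 1))
          * (((j : ℕ) : ℝ) + 1)⁻¹ := by field_simp
      _ ≤ (2 * d * (n.factorial : ℝ)) * (((j : ℕ) : ℝ) + 1)⁻¹ := by
          apply mul_le_mul_of_nonneg_right hcast (by positivity)
      _ = (n.factorial : ℝ) * (2 * d) * (1 / (((j : ℕ) : ℝ) + 1)) := by ring
  calc ∑ j : Fin n, ((Finset.univ.filter (fun σ : Equiv.Perm (Fin n) =>
        SplitBelowEvent pts q α β τ σ j)).card : ℝ)
      ≤ ∑ j : Fin n, (n.factorial : ℝ) * (2 * d) * (1 / ((j : ℕ) + 1)) :=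
        Finset.sum_le_sum (fun j _ => hperj j)
    _ = (n.factorial : ℝ) * (2 * d * ∑ j : Fin n, 1 / (((j : ℕ) : ℝ) + 1)) := by
        rw [← Finset.mul_sum, mul_assoc]
    _ = (n.factorial : ℝ) * (2 * d * ∑ m ∈ Finset.range n, (1 : ℝ) / (m + 1)) := by
        congr 1
        congr 1
        exact Fin.sum_univ_eq_sum_range (fun m => (1 : ℝ) / (m + 1)) n
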